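/- Fix $e\ge2$ and a prime $p$, and let $b\in\mathbb Z_{\ge0}$. Let $\mathtt t$ be a standard tableau of size $n$ with at most two columns, let $\mathtt s=\operatorname{reg}_{ep^b}(\mathtt t)$, and suppose $b$ is maximal such that $\mathtt s=\operatorname{reg}_{ep^b}(\mathtt t)$. Then for every integer $c>b$, the tableau $\mathtt t$ is $ep^c$-regular if and only if $\mathtt s$ is $ep^c$-regular. -/

import Mathlib

open scoped Classical
noncomputable section

def isWall (e x : ℤ) : Prop := 0 < x + 1 ∧ (x + 1) % e = 0

def degStep (e u v : ℤ) : ℤ :=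
  if isWall e u ∧ v < u then 1
  else if isWall e v ∧ v < u then -1
  else 0

def pathDeg (e : ℤ) (π : ℕ → ℤ) (r s : ℕ) : ℤ :=
  ∑ a ∈ Finset.Ico r s, degStep e (π a) (π (a + 1))

/-- A nonnegative `±1`-path on the interval `[u,v]`. -/
def IsPathOn (π : ℕ → ℤ) (u v : ℕ) : Prop :=
  (∀ a, u ≤ a → a ≤ v → 0 ≤ π a) ∧
  (∀ a, u ≤ a → a < v → π (a + 1) = π a + 1 ∨ π (a + 1) = π a - 1)

/-- `π[r,s]` is a positive arc (within `[u,v]`). -/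
def IsPosArc (e : ℤ) (π : ℕ → ℤ) (u v r s : ℕ) : Prop :=
  u ≤ r ∧ r < s ∧ s ≤ v ∧ isWall e (π r) ∧ π s = π r ∧
    ∀ c, r < c → c < s → π r < π c ∧ π c < π r + e

/-- `π[r,s]` is a negative arc (within `[u,v]`). -/
def IsNegArc (e : ℤ) (π : ℕ → ℤ) (u v r s : ℕ) : Prop :=
  u ≤ r ∧ r < s ∧ s ≤ v ∧ isWall e (π r) ∧ π s = π r ∧
    ∀ c, r < c → c < s → π r - e < π c ∧ π c < π r

def posArcs (e : ℤ) (π : ℕ → ℤ) (u v : ℕ) : Set (ℕ × ℕ) :=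
  {p | IsPosArc e π u v p.1 p.2}

def negArcs (e : ℤ) (π : ℕ → ℤ) (u v : ℕ) : Set (ℕ × ℕ) :=
  {p | IsNegArc e π u v p.1 p.2}


def wallTimes (f : ℤ) (n : ℕ) (π : ℕ → ℤ) : Finset ℕ :=
  (Finset.range (n + 1)).filter fun a => isWall f (π a)

/-- The regularisation map on paths: reflect the tail after the last wall
visit upward in the wall, if the endpoint lies strictly below that wall. -/
def regPath (f : ℤ) (n : ℕ) (π : ℕ → ℤ) : ℕ → ℤ :=
  if h : (wallTimes f n π).Nonempty then
    let a := (wallTimes f n π).max' h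
    if π n < π a then (fun b => if b ≤ a then π b else 2 * π a - π b) else π
  else π

/-- A standard tableau of size `n` (0-based nodes): injective, image is a
Young diagram (downward closed), entries increase along rows and columns. -/
def IsStdTab (n : ℕ) (t : Fin n → ℕ × ℕ) : Prop :=
  Function.Injective t ∧
  (∀ r : Fin n, ∀ a b : ℕ, a ≤ (t r).1 → b ≤ (t r).2 → ∃ r' : Fin n, t r' = (a, b)) ∧
  (∀ r s : Fin n, (t r).1 ≤ (t s).1 → (t r).2 ≤ (t s).2 → r ≤ s)

/-- Number of entries among the first `a` entries lying in column `j`. -/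
def cntCol (n : ℕ) (t : Fin n → ℕ × ℕ) (a j : ℕ) : ℕ :=
  (Finset.univ.filter fun r : Fin n => (r : ℕ) < a ∧ (t r).2 = j).card

/-- The type-`A₁` path attached to a two-column tableau. -/
def pth (n : ℕ) (t : Fin n → ℕ × ℕ) (a : ℕ) : ℤ :=
  (cntCol n t a 0 : ℤ) - (cntCol n t a 1 : ℤ)

/-- Membership in the Young diagram of `(2^x, 1^y)` (0-based). -/
def memShape2 (x y : ℕ) (v : ℕ × ℕ) : Prop :=
  (v.1 < x ∧ v.2 < 2) ∨ (x ≤ v.1 ∧ v.1 < x + y ∧ v.2 = 0)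

/-- The residue of a node (0-based): column minus row, mod `e`. -/
def resNode (e : ℕ) (v : ℕ × ℕ) : ZMod e := (v.2 : ZMod e) - (v.1 : ZMod e)


section Aux

lemma mem_wallTimes_iff {f : ℤ} {n : ℕ} {π : ℕ → ℤ} {x : ℕ} :
    x ∈ wallTimes f n π ↔ x ≤ n ∧ isWall f (π x) := by
  simp [wallTimes, Nat.lt_succ_iff]

lemma regPath_eq_of_not_nonempty {f : ℤ} {n : ℕ} {π : ℕ → ℤ}
    (h : ¬ (wallTimes f n π).Nonempty) : regPath f n π = π := by
  rw [regPath, dif_neg h]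

lemma regPath_eq_of_ge {f : ℤ} {n : ℕ} {π : ℕ → ℤ}
    (h : (wallTimes f n π).Nonempty)
    (h2 : ¬ π n < π ((wallTimes f n π).max' h)) : regPath f n π = π := by
  rw [regPath, dif_pos h]; exact if_neg h2

lemma regPath_eq_of_lt {f : ℤ} {n : ℕ} {π : ℕ → ℤ}
    (h : (wallTimes f n π).Nonempty)
    (h2 : π n < π ((wallTimes f n π).max' h)) :
    regPath f n π = fun b => if b ≤ (wallTimes f n π).max' h then π b
      else 2 * π ((wallTimes f n π).max' h) - π b := by
  rw [regPath, dif_pos h]; exact if_pos h2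

lemma isWall_iff {f x : ℤ} : isWall f x ↔ 0 < x + 1 ∧ f ∣ (x + 1) := by
  unfold isWall
  constructor
  · rintro ⟨h1, h2⟩; exact ⟨h1, Int.dvd_of_emod_eq_zero h2⟩
  · rintro ⟨h1, h2⟩; exact ⟨h1, Int.emod_eq_zero_of_dvd h2⟩

lemma regPath_max'_eq {f : ℤ} {n : ℕ} {π : ℕ → ℤ} {a : ℕ} (ha : a ≤ n)
    (haw : isWall f (π a)) (hno : ∀ x, a < x → x ≤ n → ¬ isWall f (π x)) :
    ∃ h : (wallTimes f n π).Nonempty, (wallTimes f n π).max' h = a := by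
  have hmem : a ∈ wallTimes f n π := mem_wallTimes_iff.2 ⟨ha, haw⟩
  refine ⟨⟨a, hmem⟩, le_antisymm ?_ (Finset.le_max' _ _ hmem)⟩
  apply Finset.max'_le
  intro y hy
  rw [mem_wallTimes_iff] at hy
  by_contra h
  push_neg at h
  exact hno y h hy.1 hy.2

lemma regPath_eq_reflect (f : ℤ) (n : ℕ) (π : ℕ → ℤ) (a : ℕ) (ha : a ≤ n)
    (haw : isWall f (π a)) (hno : ∀ x, a < x → x ≤ n → ¬ isWall f (π x))
    (hlt : π n < π a) :
    regPath f n π = fun b => if b ≤ a then π b else 2 * π a - π b := by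
  obtain ⟨hne, hmax⟩ := regPath_max'_eq ha haw hno
  rw [regPath_eq_of_lt hne (by rw [hmax]; exact hlt), hmax]

lemma regPath_eq_self_of_ge (f : ℤ) (n : ℕ) (π : ℕ → ℤ) (a : ℕ) (ha : a ≤ n)
    (haw : isWall f (π a)) (hno : ∀ x, a < x → x ≤ n → ¬ isWall f (π x))
    (hge : ¬ π n < π a) : regPath f n π = π := by
  obtain ⟨hne, hmax⟩ := regPath_max'_eq ha haw hno
  exact regPath_eq_of_ge hne (by rw [hmax]; exact hge)

lemma regPath_ne (f : ℤ) (n : ℕ) (π : ℕ → ℤ) (a : ℕ) (ha : a < n)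
    (haw : isWall f (π a)) (hno : ∀ x, a < x → x ≤ n → ¬ isWall f (π x))
    (hlt : π n < π a) : regPath f n π ≠ π := by
  rw [regPath_eq_reflect f n π a ha.le haw hno hlt]
  intro h
  have h2 := congrFun h n
  simp only [if_neg (by omega : ¬ n ≤ a)] at h2
  omega

lemma regPath_eq_self_of_nowalls (f : ℤ) (n : ℕ) (π : ℕ → ℤ)
    (h : ∀ x, x ≤ n → ¬ isWall f (π x)) : regPath f n π = π := by
  apply regPath_eq_of_not_nonempty
  rintro ⟨x, hx⟩
  rw [mem_wallTimes_iff] at hx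
  exact h x hx.1 hx.2

lemma window {f : ℤ} (hf : 2 ≤ f) {n : ℕ} {π : ℕ → ℤ}
    (hnn : ∀ x, x ≤ n → 0 ≤ π x)
    (hst : ∀ x, x < n → π (x+1) = π x + 1 ∨ π (x+1) = π x - 1)
    {a : ℕ} (han : a < n) (haw : f ∣ π a + 1)
    (hnowall : ∀ x, a < x → x ≤ n → ¬ f ∣ π x + 1)
    (hend : π n < π a) : π a - f < π n := by
  rcases hst a han with h1 | h1
  · exfalso
    have hup : ∀ x, a + 1 ≤ x → x ≤ n → π a < π x := by
      intro x hx
      induction x, hx using Nat.le_induction with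
      | base => intro _; rw [h1]; linarith
      | succ x hx ih =>
        intro hxn
        have hx' := ih (by omega)
        rcases hst x (by omega) with h2 | h2
        · rw [h2]; linarith
        · rw [h2]
          have hne : π x - 1 ≠ π a := by
            intro h
            exact hnowall (x+1) (by omega) hxn (by rw [h2, h]; exact haw)
          omega
    linarith [hup n (by omega) le_rfl]
  · have hlo : ∀ x, a + 1 ≤ x → x ≤ n → π a - f < π x ∧ π x < π a := by
      intro x hx
      induction x, hx using Nat.le_induction with
      | base => intro _; rw [h1]; constructor <;> linarith
      | succ x hx ih =>
        intro hxn
        obtain ⟨hl, hr⟩ := ih (by omega)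
        rcases hst x (by omega) with h2 | h2
        · have hne : π x + 1 ≠ π a := by
            intro h
            exact hnowall (x+1) (by omega) hxn (by rw [h2, h]; exact haw)
          rw [h2]
          constructor
          · linarith
          · omega
        · have hne : π x - 1 ≠ π a - f := by
            intro h
            apply hnowall (x+1) (by omega) hxn
            rw [h2, h]
            have heq2 : π a - f + 1 = (π a + 1) - f := by ring
            rw [heq2]
            exact dvd_sub haw dvd_rfl
          rw [h2]
          constructor
          · omega
          · linarith
    exact (hlo n (by omega) le_rfl).1

lemma cntCol_succ (n : ℕ) (t : Fin n → ℕ × ℕ) (a j : ℕ) (ha : a < n) :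
    cntCol n t (a+1) j = cntCol n t a j + if (t ⟨a, ha⟩).2 = j then 1 else 0 := by
  unfold cntCol
  have hsplit : (Finset.univ.filter fun r : Fin n => (r : ℕ) < a + 1 ∧ (t r).2 = j)
      = (Finset.univ.filter fun r : Fin n => (r : ℕ) < a ∧ (t r).2 = j)
        ∪ (Finset.univ.filter fun r : Fin n => (r : ℕ) = a ∧ (t r).2 = j) := by
    ext r
    simp only [Finset.mem_filter, Finset.mem_union, Finset.mem_univ, true_and]
    constructor
    · rintro ⟨h1, h2⟩
      rcases Nat.lt_succ_iff_lt_or_eq.1 h1 with h | h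
      · exact Or.inl ⟨h, h2⟩
      · exact Or.inr ⟨h, h2⟩
    · rintro (⟨h1, h2⟩ | ⟨h1, h2⟩)
      · exact ⟨by omega, h2⟩
      · exact ⟨by omega, h2⟩
  rw [hsplit, Finset.card_union_of_disjoint]
  · congr 1
    by_cases h : (t ⟨a, ha⟩).2 = j
    · rw [if_pos h]
      rw [show (Finset.univ.filter fun r : Fin n => (r : ℕ) = a ∧ (t r).2 = j)
          = {(⟨a, ha⟩ : Fin n)} from ?_]
      · exact Finset.card_singleton _
      · ext r
        simp only [Finset.mem_filter, Finset.mem_univ, true_and, Finset.mem_singleton]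
        constructor
        · rintro ⟨h1, _⟩; exact Fin.ext h1
        · rintro rfl; exact ⟨rfl, h⟩
    · rw [if_neg h]
      rw [Finset.card_eq_zero]
      ext r
      simp only [Finset.mem_filter, Finset.mem_univ, true_and, Finset.notMem_empty, iff_false,
        not_and]
      intro h1 h2
      have hr : r = ⟨a, ha⟩ := Fin.ext h1
      rw [hr] at h2
      exact h h2
  · rw [Finset.disjoint_left]
    intro r hr hr2
    simp only [Finset.mem_filter, Finset.mem_univ, true_and] at hr hr2
    omega

lemma cntCol_le (n : ℕ) (t : Fin n → ℕ × ℕ) (ht : IsStdTab n t) (a : ℕ) :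
    cntCol n t a 1 ≤ cntCol n t a 0 := by
  obtain ⟨hinj, hcl, hord⟩ := ht
  unfold cntCol
  have hex : ∀ r : Fin n, ∃ r' : Fin n, t r' = ((t r).1, 0) :=
    fun r => hcl r (t r).1 0 le_rfl (Nat.zero_le _)
  apply Finset.card_le_card_of_injOn (fun r => Classical.choose (hex r))
  · intro r hr
    simp only [Finset.mem_coe, Finset.mem_filter, Finset.mem_univ, true_and] at hr ⊢
    have hspec := Classical.choose_spec (hex r)
    have hle : Classical.choose (hex r) ≤ r := by
      apply hord
      · rw [hspec]
      · rw [hspec]; exact Nat.zero_le _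
    refine ⟨lt_of_le_of_lt ?_ hr.1, by rw [hspec]⟩
    exact hle
  · intro r1 h1 r2 h2 heq
    simp only [Finset.coe_filter, Finset.mem_univ, true_and, Set.mem_setOf_eq] at h1 h2
    have hs1 := Classical.choose_spec (hex r1)
    have hs2 := Classical.choose_spec (hex r2)
    have heq' : Classical.choose (hex r1) = Classical.choose (hex r2) := heq
    rw [heq'] at hs1
    have hfst : (t r1).1 = (t r2).1 := by
      have h12 := hs1.symm.trans hs2
      exact (Prod.ext_iff.1 h12).1
    apply hinj
    exact Prod.ext hfst (h1.2.trans h2.2.symm)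

lemma pth_step {n : ℕ} {t : Fin n → ℕ × ℕ} (ht2 : ∀ i, (t i).2 < 2)
    {x : ℕ} (hx : x < n) :
    pth n t (x+1) = pth n t x + 1 ∨ pth n t (x+1) = pth n t x - 1 := by
  have h0 := cntCol_succ n t x 0 hx
  have h1 := cntCol_succ n t x 1 hx
  have hcol := ht2 ⟨x, hx⟩
  unfold pth
  rcases (by omega : (t ⟨x, hx⟩).2 = 0 ∨ (t ⟨x, hx⟩).2 = 1) with h | h
  · left
    rw [h0, h1, if_pos h, if_neg (by omega)]
    push_cast
    ring
  · right
    rw [h0, h1, if_neg (by omega), if_pos h]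
    push_cast
    ring

lemma pth_nonneg {n : ℕ} {t : Fin n → ℕ × ℕ} (ht : IsStdTab n t) (a : ℕ) :
    0 ≤ pth n t a := by
  have := cntCol_le n t ht a
  unfold pth
  omega

lemma main_aux (fb fc : ℤ) (hfb : 2 ≤ fb) (hfc0 : 0 < fc) (hdvd : fb ∣ fc)
    (n : ℕ) (π σ : ℕ → ℤ)
    (hnn : ∀ x, x ≤ n → 0 ≤ π x)
    (hst : ∀ x, x < n → π (x+1) = π x + 1 ∨ π (x+1) = π x - 1)
    (a : ℕ) (ha : a ≤ n) (haw : isWall fb (π a))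
    (hnowall : ∀ x, a < x → x ≤ n → ¬ isWall fb (π x))
    (hlt : π n < π a)
    (hσ : σ = fun b => if b ≤ a then π b else 2 * π a - π b)
    (hnot : regPath fc n π ≠ σ) :
    (regPath fc n π = π ↔ regPath fc n σ = σ) := by
  have hfb0 : (0:ℤ) < fb := by linarith
  have han : a < n := lt_of_le_of_ne ha (by rintro rfl; exact absurd hlt (lt_irrefl _))
  have hwd : fb ∣ π a + 1 := (isWall_iff.1 haw).2
  have hnowall' : ∀ x, a < x → x ≤ n → ¬ fb ∣ π x + 1 := by
    intro x h1 h2 hd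
    exact hnowall x h1 h2 (isWall_iff.2 ⟨by linarith [hnn x h2], hd⟩)
  have hwin : π a - fb < π n := window hfb hnn hst han hwd hnowall' hlt
  have hσle : ∀ x, x ≤ a → σ x = π x := by
    intro x hx; rw [hσ]; simp [hx]
  have hσgt : ∀ x, a < x → σ x = 2 * π a - π x := by
    intro x hx; rw [hσ]; simp [Nat.not_le.2 hx]
  have hσn : σ n = 2 * π a - π n := hσgt n han
  have hfc_to_fb : ∀ z : ℤ, isWall fc z → fb ∣ z + 1 :=
    fun z hz => dvd_trans hdvd (isWall_iff.1 hz).2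
  have hnofcπ : ∀ x, a < x → x ≤ n → ¬ isWall fc (π x) :=
    fun x h1 h2 hw => hnowall' x h1 h2 (hfc_to_fb _ hw)
  have hnofcσ : ∀ x, a < x → x ≤ n → ¬ isWall fc (σ x) := by
    intro x h1 h2 hw
    have hd : fb ∣ σ x + 1 := hfc_to_fb _ hw
    rw [hσgt x h1] at hd
    have hdx : fb ∣ π x + 1 := by
      have h2d : fb ∣ 2 * (π a + 1) := Dvd.dvd.mul_left hwd 2
      have hsub : fb ∣ 2 * (π a + 1) - (2 * π a - π x + 1) := dvd_sub h2d hd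
      have heq2 : 2 * (π a + 1) - (2 * π a - π x + 1) = π x + 1 := by ring
      rwa [heq2] at hsub
    exact hnowall' x h1 h2 hdx
  have hwallσπ : ∀ x, x ≤ n → (isWall fc (σ x) ↔ isWall fc (π x)) := by
    intro x hx
    by_cases hxa : x ≤ a
    · rw [hσle x hxa]
    · have h1 : a < x := by omega
      exact iff_of_false (hnofcσ x h1 hx) (hnofcπ x h1 hx)
  have hQ2 : ¬ isWall fc (π a) := by
    intro hw
    apply hnot
    rw [regPath_eq_reflect fc n π a ha hw hnofcπ hlt, hσ]
  by_cases hW : ∃ x, x ≤ n ∧ isWall fc (π x)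
  · have hne' : (wallTimes fc n π).Nonempty := by
      obtain ⟨x, hx1, hx2⟩ := hW
      exact ⟨x, mem_wallTimes_iff.2 ⟨hx1, hx2⟩⟩
    obtain ⟨a', ha'n, ha'w, ha'max⟩ :
        ∃ a', a' ≤ n ∧ isWall fc (π a') ∧ ∀ y, y ≤ n → isWall fc (π y) → y ≤ a' := by
      refine ⟨(wallTimes fc n π).max' hne', ?_, ?_, ?_⟩
      · exact (mem_wallTimes_iff.1 ((wallTimes fc n π).max'_mem hne')).1
      · exact (mem_wallTimes_iff.1 ((wallTimes fc n π).max'_mem hne')).2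
      · intro y hy1 hy2; exact Finset.le_max' _ _ (mem_wallTimes_iff.2 ⟨hy1, hy2⟩)
    have ha'a : a' ≤ a := by
      by_contra h
      push_neg at h
      exact hnofcπ a' h ha'n ha'w
    have ha'n2 : a' < n := lt_of_le_of_lt ha'a han
    have hσa' : σ a' = π a' := hσle a' ha'a
    have hno'π : ∀ x, a' < x → x ≤ n → ¬ isWall fc (π x) := by
      intro x h1 h2 hw
      have := ha'max x h2 hw
      omega
    have hno'σ : ∀ x, a' < x → x ≤ n → ¬ isWall fc (σ x) := by
      intro x h1 h2 hw
      exact hno'π x h1 h2 ((hwallσπ x h2).1 hw)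
    have ha'σw : isWall fc (σ a') := by rw [hσa']; exact ha'w
    have hne_w : π a' ≠ π a := fun h => hQ2 (h ▸ ha'w)
    have hd' : fb ∣ π a' - π a := by
      have hsub := dvd_sub (hfc_to_fb _ ha'w) hwd
      have heq2 : π a' + 1 - (π a + 1) = π a' - π a := by ring
      rwa [heq2] at hsub
    have hbig : fb ≤ π a' - π a ∨ fb ≤ π a - π a' := by
      have h1 : π a' - π a ≠ 0 := sub_ne_zero.2 hne_w
      have h2 : fb ≤ |π a' - π a| := Int.le_of_dvd (abs_pos.2 h1) ((dvd_abs _ _).2 hd')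
      rcases abs_cases (π a' - π a) with ⟨he', _⟩ | ⟨he', _⟩
      · left; rwa [he'] at h2
      · right; rw [he'] at h2; linarith
    have hkey : π n < π a' ↔ σ n < π a' := by
      rcases hbig with h | h
      · have t1 : π n < π a' := by linarith
        have t2 : σ n < π a' := by rw [hσn]; linarith
        simp [t1, t2]
      · have t1 : ¬ π n < π a' := not_lt.2 (by linarith)
        have t2 : ¬ σ n < π a' := by rw [hσn]; exact not_lt.2 (by linarith)
        simp [t1, t2]
    by_cases hcase : π n < π a'
    · have hσc : σ n < σ a' := by rw [hσa']; exact hkey.1 hcase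
      exact iff_of_false
        (regPath_ne fc n π a' ha'n2 ha'w hno'π hcase)
        (regPath_ne fc n σ a' ha'n2 ha'σw hno'σ hσc)
    · have hσc : ¬ σ n < σ a' := by rw [hσa']; exact fun h => hcase (hkey.2 h)
      exact iff_of_true
        (regPath_eq_self_of_ge fc n π a' ha'n ha'w hno'π hcase)
        (regPath_eq_self_of_ge fc n σ a' ha'n ha'σw hno'σ hσc)
  · push_neg at hW
    have hWσ : ∀ x, x ≤ n → ¬ isWall fc (σ x) := by
      intro x hx hw
      exact hW x hx ((hwallσπ x hx).1 hw)
    exact iff_of_true (regPath_eq_self_of_nowalls fc n π hW)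
      (regPath_eq_self_of_nowalls fc n σ hWσ)

end Aux

theorem stmt11 (e p : ℕ) (he : 2 ≤ e) (hp : p.Prime) (b n : ℕ)
    (t s : Fin n → ℕ × ℕ)
    (ht : IsStdTab n t) (ht2 : ∀ i, (t i).2 < 2)
    (hs : IsStdTab n s) (hs2 : ∀ i, (s i).2 < 2)
    (hreg : pth n s = regPath ((e : ℤ) * (p : ℤ) ^ b) n (pth n t))
    (hmax : ∀ c, b < c → regPath ((e : ℤ) * (p : ℤ) ^ c) n (pth n t) ≠ pth n s)
    (c : ℕ) (hc : b < c) :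
    regPath ((e : ℤ) * (p : ℤ) ^ c) n (pth n t) = pth n t ↔
      regPath ((e : ℤ) * (p : ℤ) ^ c) n (pth n s) = pth n s := by
  have hp2 : (2:ℤ) ≤ (p:ℤ) := by exact_mod_cast hp.two_le
  have he2 : (2:ℤ) ≤ (e:ℤ) := by exact_mod_cast he
  have hpb1 : (1:ℤ) ≤ (p:ℤ) ^ b := one_le_pow₀ (by linarith)
  have hfb2 : (2:ℤ) ≤ (e:ℤ) * (p:ℤ) ^ b := by
    calc (2:ℤ) ≤ (e:ℤ) := he2
    _ = (e:ℤ) * 1 := by ring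
    _ ≤ (e:ℤ) * (p:ℤ) ^ b := by
        apply mul_le_mul_of_nonneg_left hpb1 (by linarith)
  have hfc0 : (0:ℤ) < (e:ℤ) * (p:ℤ) ^ c :=
    mul_pos (by linarith) (pow_pos (by linarith) c)
  have hdvd : ((e:ℤ) * (p:ℤ) ^ b) ∣ ((e:ℤ) * (p:ℤ) ^ c) :=
    mul_dvd_mul_left _ (pow_dvd_pow _ hc.le)
  by_cases h0 : regPath ((e:ℤ) * (p:ℤ) ^ b) n (pth n t) = pth n t
  · rw [hreg, h0]
  · have hne : (wallTimes ((e:ℤ) * (p:ℤ) ^ b) n (pth n t)).Nonempty := by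
      by_contra h
      exact h0 (regPath_eq_of_not_nonempty h)
    have hlt : pth n t n <
        pth n t ((wallTimes ((e:ℤ) * (p:ℤ) ^ b) n (pth n t)).max' hne) := by
      by_contra h
      exact h0 (regPath_eq_of_ge hne h)
    have hmem := Finset.max'_mem _ hne
    rw [mem_wallTimes_iff] at hmem
    refine main_aux _ _ hfb2 hfc0 hdvd n (pth n t) (pth n s)
      (fun x _ => pth_nonneg ht x) (fun x hx => pth_step ht2 hx)
      _ hmem.1 hmem.2 ?_ hlt (hreg.trans (regPath_eq_of_lt hne hlt)) (hmax c hc)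
    intro x h1 h2 hw
    have := Finset.le_max' _ x (mem_wallTimes_iff.2 ⟨h2, hw⟩)
    omega
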